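/- Let c, p, q be positive integers. Let G be a graph, let x, y be distinct non-adjacent vertices of G, and let P_0 be a collection of c(p+1)q pairwise internally disjoint induced paths in G from x to y. Let W_0 be an x-slash for P_0 in G. Then either (a) there exist P ⊆ P_0 with |P| = p and a subpath W of W_0 such that W is an x-slash for P in G and there is no induced path of length at most c+1 from x to y within V(P) ∪ V(W); or (b) there exists a collection Q of q pairwise internally disjoint paths in G from x to y, each of length at most c+1. -/

import Mathlib

/-- `l` is the vertex sequence of an induced path in `G`. -/
def IsPathList {V : Type} (G : SimpleGraph V) (l : List V) : Prop :=
  l ≠ [] ∧ l.Nodup ∧ ∀ i j : Fin l.length,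
    (G.Adj (l.get i) (l.get j) ↔ (i.1 + 1 = j.1 ∨ j.1 + 1 = i.1))

/-- `p` is an induced path in `G` from `x` to `y`. -/
def IsXYPath {V : Type} (G : SimpleGraph V) (x y : V) (p : List V) : Prop :=
  IsPathList G p ∧ p.head? = some x ∧ p.getLast? = some y

/-- `w` is an `x`-slash for the collection `P` of paths from `x` to `y`:
an induced path avoiding `x` and `y` that contains the (unique) neighbor of
`x` on each path of `P`. -/
def XSlash {V : Type} (G : SimpleGraph V) (x y : V)
    (P : Finset (List V)) (w : List V) : Prop :=
  IsPathList G w ∧ x ∉ w ∧ y ∉ w ∧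
  ∀ p ∈ P, ∀ v ∈ p, G.Adj x v → v ∈ w

variable {V : Type} {G : SimpleGraph V} {x y : V}

lemma adj_getElem {l : List V} (h : IsPathList G l) {i j : ℕ} (hi : i < l.length)
    (hj : j < l.length) : G.Adj l[i] l[j] ↔ (i + 1 = j ∨ j + 1 = i) := by
  have := h.2.2 ⟨i, hi⟩ ⟨j, hj⟩
  simpa [List.get_eq_getElem] using this

lemma head_getElem {l : List V} (hne : l ≠ []) (hh : l.head? = some x) :
    l[0]'(List.length_pos_iff.2 hne) = x := by
  cases l with
  | nil => simp at hne
  | cons a t => simpa using hh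

lemma last_getElem {l : List V} (hne : l ≠ []) (hh : l.getLast? = some y) :
    l[l.length - 1]'(by cases l <;> simp_all) = y := by
  rw [← List.getLast_eq_getElem hne, List.getLast?_eq_getLast hne] at *
  simpa using hh

lemma path_facts (hxy : x ≠ y) (hnadj : ¬ G.Adj x y) {l : List V}
    (hl : IsXYPath G x y l) :
    3 ≤ l.length ∧ l.getD 1 x ∈ l ∧ G.Adj x (l.getD 1 x) ∧ l.getD 1 x ≠ x ∧
    l.getD 1 x ≠ y ∧ (∀ v ∈ l, G.Adj x v → v = l.getD 1 x) := by
  have hne := hl.1.1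
  have hnd := hl.1.2.1
  have hh := hl.2.1
  have hlast := hl.2.2
  have h0 : 0 < l.length := List.length_pos_iff.2 hne
  have hx0 : l[0] = x := head_getElem hne hh
  have hyl : l[l.length - 1]'(by omega) = y := last_getElem hne hlast
  have h3 : 3 ≤ l.length := by
    by_contra h3'
    have hle : l.length = 1 ∨ l.length = 2 := by omega
    rcases hle with h | h
    · apply hxy
      have e : l.length - 1 = 0 := by omega
      rw [← hx0, ← hyl]
      simp only [e]
    · apply hnadj
      have := (adj_getElem hl.1 (i := 0) (j := 1) (by omega) (by omega)).2 (by omega)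
      have e : l.length - 1 = 1 := by omega
      simp only [e] at hyl
      rwa [hx0, hyl] at this
  have h1 : 1 < l.length := by omega
  have hgd : l.getD 1 x = l[1] := List.getD_eq_getElem l x h1
  have hadj1 : G.Adj x (l.getD 1 x) := by
    rw [hgd, ← hx0]; exact (adj_getElem hl.1 h0 h1).2 (by omega)
  refine ⟨h3, by rw [hgd]; exact List.getElem_mem _, hadj1, ?_, ?_, ?_⟩
  · rw [hgd, ← hx0]; intro h
    have := hnd.getElem_inj_iff.mp h; omega
  · rw [hgd, ← hyl]; intro h
    have := hnd.getElem_inj_iff.mp h; omega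
  · intro v hv hadj
    obtain ⟨i, hi, rfl⟩ := List.mem_iff_getElem.1 hv
    rw [← hx0] at hadj
    have := (adj_getElem hl.1 h0 hi).1 hadj
    rw [hgd]; congr 1; omega

lemma block_len {W0 : List V} {a m : ℕ} (hlen : a + m ≤ W0.length) :
    ((W0.drop a).take m).length = m := by simp; omega

lemma block_infix (W0 : List V) (a m : ℕ) : ((W0.drop a).take m) <:+: W0 :=
  ⟨W0.take a, (W0.drop a).drop m, by simp⟩

lemma block_getElem {W0 : List V} {a m i : ℕ} (hlen : a + m ≤ W0.length)
    (hi : i < m) :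
    ((W0.drop a).take m)[i]'(by rw [block_len hlen]; exact hi) =
      W0[a + i]'(by omega) := by
  rw [List.getElem_take, List.getElem_drop]

lemma block_pathlist {W0 : List V} (hW : IsPathList G W0) {a m : ℕ} (hm : 0 < m)
    (hlen : a + m ≤ W0.length) : IsPathList G ((W0.drop a).take m) := by
  refine ⟨?_, ((block_infix W0 a m).sublist).nodup hW.2.1, ?_⟩
  · intro h
    have := block_len (W0 := W0) hlen
    rw [h] at this; simp at this; omega
  · intro i j
    have hi : (i : ℕ) < m := lt_of_lt_of_eq i.2 (block_len hlen)
    have hj : (j : ℕ) < m := lt_of_lt_of_eq j.2 (block_len hlen)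
    simp only [List.get_eq_getElem, block_getElem hlen hi, block_getElem hlen hj]
    rw [adj_getElem hW (by omega) (by omega)]
    omega

lemma step_lemma (c p q : ℕ) (hc : 0 < c) (hp : 0 < p) (hq : 0 < q)
    (hxy : x ≠ y) (hnadj : ¬ G.Adj x y)
    (P0 : Finset (List V)) (hcard : c * (p + 1) * q ≤ P0.card)
    (hpaths : ∀ P ∈ P0, IsXYPath G x y P)
    (hdisj : ∀ P ∈ P0, ∀ Q ∈ P0, P ≠ Q → ∀ v ∈ P, v ∈ Q → v = x ∨ v = y)
    (W0 : List V) (hW0 : XSlash G x y P0 W0)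
    (S : Finset V) (hS : S.card ≤ c * (q - 1)) (hxS : x ∉ S) (hyS : y ∉ S) :
    ∃ P ⊆ P0, P.card = p ∧ ∃ W : List V, W <:+: W0 ∧ XSlash G x y P W ∧
      (∀ l ∈ P, ∀ v ∈ l, v ∉ S) ∧ (∀ v ∈ W, v ∉ S) := by
  classical
  set nb : List V → V := fun l => l.getD 1 x with hnb
  set idx : List V → ℕ := fun l => W0.idxOf (nb l) with hidx
  have pf : ∀ l ∈ P0, 3 ≤ l.length ∧ nb l ∈ l ∧ G.Adj x (nb l) ∧ nb l ≠ x ∧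
      nb l ≠ y ∧ (∀ v ∈ l, G.Adj x v → v = nb l) :=
    fun l hl => path_facts hxy hnadj (hpaths l hl)
  have nbW : ∀ l ∈ P0, nb l ∈ W0 := fun l hl =>
    hW0.2.2.2 l hl _ (pf l hl).2.1 (pf l hl).2.2.1
  have idxlt : ∀ l ∈ P0, idx l < W0.length := fun l hl =>
    List.idxOf_lt_length_iff.2 (nbW l hl)
  have getidx : ∀ l (hl : l ∈ P0), W0[idx l]'(idxlt l hl) = nb l := by
    intro l hl; exact List.getElem_idxOf (idxlt l hl)
  have inj : ∀ l ∈ P0, ∀ l' ∈ P0, idx l = idx l' → l = l' := by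
    intro l hl l' hl' he
    have h1 : nb l = nb l' := by
      rw [← getidx l hl, ← getidx l' hl']
      simp only [he]
    by_contra hne
    rcases hdisj l hl l' hl' hne (nb l) (pf l hl).2.1 (h1 ▸ (pf l' hl').2.1) with h | h
    · exact (pf l hl).2.2.2.1 h
    · exact (pf l hl).2.2.2.2.1 h
  -- good paths
  set Pg := P0.filter (fun l => ∀ v ∈ l, v ∉ S) with hPg
  have hPgsub : Pg ⊆ P0 := Finset.filter_subset _ _
  have hbadcard : (P0.filter (fun l => ¬ ∀ v ∈ l, v ∉ S)).card ≤ S.card := by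
    have hsub : (P0.filter (fun l => ¬ ∀ v ∈ l, v ∉ S)) ⊆
        S.biUnion (fun s => P0.filter (fun l => s ∈ l)) := by
      intro l hl
      simp only [Finset.mem_filter, not_forall] at hl
      obtain ⟨hl0, v, hv, hvS⟩ := hl
      simp only [not_not] at hvS
      exact Finset.mem_biUnion.2 ⟨v, hvS, Finset.mem_filter.2 ⟨hl0, hv⟩⟩
    refine (Finset.card_le_card hsub).trans ?_
    refine (Finset.card_biUnion_le).trans ?_
    refine (Finset.sum_le_card_nsmul _ _ 1 ?_).trans (by simp)
    intro s hs
    refine Finset.card_le_one.2 ?_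
    intro l hl l' hl'
    simp only [Finset.mem_filter] at hl hl'
    by_contra hne
    rcases hdisj l hl.1 l' hl'.1 hne s hl.2 hl'.2 with h | h
    · exact hxS (h ▸ hs)
    · exact hyS (h ▸ hs)
  have hPgcard : c * (p + 1) * q ≤ Pg.card + c * (q - 1) := by
    have := Finset.card_filter_add_card_filter_not
      (s := P0) (p := fun l => ∀ v ∈ l, v ∉ S)
    rw [hPg]
    omega
  -- image of indices
  set I := Pg.image idx with hI
  have hIcard : I.card = Pg.card :=
    Finset.card_image_of_injOn (fun l hl l' hl' => inj l (hPgsub hl) l' (hPgsub hl'))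
  -- bad indices
  set B := (Finset.range W0.length).filter (fun i => W0.getD i x ∈ S) with hB
  have hBcard : B.card ≤ S.card := by
    refine Finset.card_le_card_of_injOn (fun i => W0.getD i x) ?_ ?_
    · intro i hi; exact (Finset.mem_filter.1 hi).2
    · intro i hi j hj he
      have hi' : i < W0.length := Finset.mem_range.1 (Finset.mem_filter.1 hi).1
      have hj' : j < W0.length := Finset.mem_range.1 (Finset.mem_filter.1 hj).1
      simp only at he
      rw [List.getD_eq_getElem _ _ hi', List.getD_eq_getElem _ _ hj'] at he
      exact hW0.1.2.1.getElem_inj_iff.mp he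
  set f : ℕ → ℕ := fun i => (B.filter (fun b => b < i)).card with hf
  have hfle : ∀ i, f i ≤ c * (q - 1) := fun i =>
    ((Finset.card_le_card (Finset.filter_subset _ _)).trans hBcard).trans hS
  have hmaps : ∀ i ∈ I, f i ∈ Finset.range (c * (q - 1) + 1) :=
    fun i _ => Finset.mem_range.2 (Nat.lt_succ_of_le (hfle i))
  have harith : (Finset.range (c * (q - 1) + 1)).card * (p - 1) < I.card := by
    rw [Finset.card_range, hIcard]
    obtain ⟨d, rfl⟩ : ∃ d, q = d + 1 := ⟨q - 1, by omega⟩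
    obtain ⟨e, rfl⟩ : ∃ e, p = e + 1 := ⟨p - 1, by omega⟩
    simp only [Nat.add_sub_cancel] at hPgcard ⊢
    have : (c * d + 1) * e + c * d < c * (e + 1 + 1) * (d + 1) := by nlinarith
    omega
  obtain ⟨y0, _, hy0⟩ :=
    Finset.exists_lt_card_fiber_of_mul_lt_card_of_maps_to hmaps harith
  obtain ⟨T, hTsub, hTcard⟩ :=
    Finset.exists_subset_card_eq (by omega :
      p ≤ (I.filter (fun i => f i = y0)).card)
  have hTne : T.Nonempty := Finset.card_pos.1 (by omega)
  set a := T.min' hTne with ha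
  set b := T.max' hTne with hb
  have haT : a ∈ T := T.min'_mem hTne
  have hbT : b ∈ T := T.max'_mem hTne
  have hmemI : ∀ i ∈ T, ∃ l ∈ Pg, idx l = i := by
    intro i hi
    have := hTsub hi
    simp only [Finset.mem_filter, hI, Finset.mem_image] at this
    obtain ⟨⟨l, hl, hli⟩, _⟩ := this
    exact ⟨l, hl, hli⟩
  have hfT : ∀ i ∈ T, f i = y0 := fun i hi => (Finset.mem_filter.1 (hTsub hi)).2
  have hab : a ≤ b := T.min'_le _ hbT
  have hblt : b < W0.length := by
    obtain ⟨l, hl, hli⟩ := hmemI b hbT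
    exact hli ▸ idxlt l (hPgsub hl)
  -- no bad indices in [a, b]
  have hclean : ∀ i, a ≤ i → i ≤ b → W0.getD i x ∉ S := by
    intro i hai hib hiS
    have hiB : i ∈ B := Finset.mem_filter.2 ⟨Finset.mem_range.2 (by omega), hiS⟩
    rcases Nat.lt_or_ge i b with hlt | hge
    · have hss : B.filter (fun b' => b' < a) ⊂ B.filter (fun b' => b' < b) := by
        refine Finset.ssubset_iff_of_subset ?_ |>.2 ⟨i, ?_, ?_⟩
        · exact Finset.monotone_filter_right _ (fun b' hb' => by omega)
        · exact Finset.mem_filter.2 ⟨hiB, hlt⟩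
        · simp only [Finset.mem_filter]; omega
      have := Finset.card_lt_card hss
      rw [show (B.filter (fun b' => b' < a)).card = f a from rfl,
        show (B.filter (fun b' => b' < b)).card = f b from rfl,
        hfT a haT, hfT b hbT] at this
      omega
    · have hib' : i = b := by omega
      obtain ⟨l, hl, hli⟩ := hmemI b hbT
      have hgood := (Finset.mem_filter.1 hl).2
      have : W0.getD i x = nb l := by
        rw [hib', ← hli, List.getD_eq_getElem _ _ (idxlt l (hPgsub hl))]
        exact getidx l (hPgsub hl)
      exact hgood (nb l) (pf l (hPgsub hl)).2.1 (this ▸ hiS)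
  -- the chosen paths and window
  set P := Pg.filter (fun l => idx l ∈ T) with hP
  have hPsub : P ⊆ P0 := (Finset.filter_subset _ _).trans hPgsub
  have hPimg : P.image idx = T := by
    ext i
    simp only [Finset.mem_image, hP, Finset.mem_filter]
    constructor
    · rintro ⟨l, ⟨_, hi⟩, rfl⟩; exact hi
    · intro hi
      obtain ⟨l, hl, hli⟩ := hmemI i hi
      exact ⟨l, ⟨hl, hli ▸ hi⟩, hli⟩
  have hPcard : P.card = p := by
    rw [← hTcard, ← hPimg]
    exact (Finset.card_image_of_injOn
      (fun l hl l' hl' => inj l (hPsub hl) l' (hPsub hl'))).symm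
  set m := b + 1 - a with hm
  have hm0 : 0 < m := by omega
  have hlen : a + m ≤ W0.length := by omega
  have hWinfix : ((W0.drop a).take m) <:+: W0 := block_infix W0 a m
  have hWmem : ∀ i (hai : a ≤ i) (hib : i ≤ b), W0[i]'(by omega) ∈ ((W0.drop a).take m) := by
    intro i hai hib
    have heq : ((W0.drop a).take m)[i - a]'(by rw [block_len hlen]; omega) = W0[i]'(by omega) := by
      rw [block_getElem hlen (by omega : i - a < m)]
      simp only [show a + (i - a) = i by omega]
    rw [← heq]
    exact List.getElem_mem _
  have hWS : ∀ v ∈ ((W0.drop a).take m), v ∉ S := by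
    intro v hv
    obtain ⟨i, hilt, hvi⟩ := List.mem_iff_getElem.1 hv
    have hilt' : i < m := by rwa [block_len hlen] at hilt
    have : v = W0[a + i]'(by omega) := by rw [← hvi, block_getElem hlen hilt']
    rw [this, ← List.getD_eq_getElem _ x (by omega : a + i < W0.length)]
    exact hclean (a + i) (by omega) (by omega)
  refine ⟨P, hPsub, hPcard, (W0.drop a).take m, hWinfix, ?_, ?_, hWS⟩
  · refine ⟨block_pathlist hW0.1 hm0 hlen, ?_, ?_, ?_⟩
    · exact fun h => hW0.2.1 (hWinfix.subset h)
    · exact fun h => hW0.2.2.1 (hWinfix.subset h)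
    · intro l hl v hv hadj
      have hl0 := hPsub hl
      have hvnb : v = nb l := (pf l hl0).2.2.2.2.2 v hv hadj
      have hiT : idx l ∈ T := (Finset.mem_filter.1 hl).2
      have h1 : a ≤ idx l := T.min'_le _ hiT
      have h2 : idx l ≤ b := T.le_max' _ hiT
      have := hWmem (idx l) h1 h2
      rwa [getidx l hl0, ← hvnb] at this
  · exact fun l hl => (Finset.mem_filter.1 ((Finset.filter_subset _ _) hl)).2

lemma core_lemma (c p q : ℕ) (hc : 0 < c) (hp : 0 < p) (hq : 0 < q)
    (hxy : x ≠ y) (hnadj : ¬ G.Adj x y)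
    (P0 : Finset (List V)) (hcard : c * (p + 1) * q ≤ P0.card)
    (hpaths : ∀ P ∈ P0, IsXYPath G x y P)
    (hdisj : ∀ P ∈ P0, ∀ Q ∈ P0, P ≠ Q → ∀ v ∈ P, v ∈ Q → v = x ∨ v = y)
    (W0 : List V) (hW0 : XSlash G x y P0 W0)
    (hnoA : ∀ P ⊆ P0, P.card = p → ∀ W, W <:+: W0 → XSlash G x y P W →
      ∃ Q, IsXYPath G x y Q ∧ Q.length ≤ c + 2 ∧
        ∀ v ∈ Q, v = x ∨ v = y ∨ (∃ p' ∈ P, v ∈ p') ∨ v ∈ W) :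
    ∀ k, k ≤ q → ∀ S : Finset V, S.card ≤ c * (q - k) → x ∉ S → y ∉ S →
    ∃ L : List (List V), L.length = k ∧
      (∀ Q ∈ L, IsXYPath G x y Q ∧ Q.length ≤ c + 2 ∧
        ∀ v ∈ Q, v ≠ x → v ≠ y → v ∉ S) ∧
      L.Pairwise (fun Q Q' => Q ≠ Q' ∧ ∀ v ∈ Q, v ∈ Q' → v = x ∨ v = y) := by
  classical
  intro k
  induction k with
  | zero => intro _ S _ _ _; exact ⟨[], rfl, by simp, by simp⟩
  | succ k ih =>
    intro hk S hS hxS hyS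
    have hS1 : S.card ≤ c * (q - 1) :=
      hS.trans (Nat.mul_le_mul_left _ (by omega))
    obtain ⟨P, hPsub, hPcard, W, hWinf, hslash, hPS, hWS⟩ :=
      step_lemma c p q hc hp hq hxy hnadj P0 hcard hpaths hdisj W0 hW0 S hS1 hxS hyS
    obtain ⟨Q, hQpath, hQlen, hQin⟩ := hnoA P hPsub hPcard W hWinf hslash
    have hxQ : x ∈ Q := by
      have := hQpath.2.1
      exact List.mem_of_mem_head? (by rw [this]; rfl)
    have hyQ : y ∈ Q := by
      have := hQpath.2.2
      exact List.mem_of_mem_getLast? (by rw [this]; rfl)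
    have hxy2 : ({x, y} : Finset V) ⊆ Q.toFinset := by
      intro v hv
      simp only [Finset.mem_insert, Finset.mem_singleton] at hv
      rcases hv with rfl | rfl <;> simp [hxQ, hyQ]
    have hIcard : (Q.toFinset \ {x, y}).card ≤ c := by
      rw [Finset.card_sdiff_of_subset hxy2]
      have h1 : Q.toFinset.card ≤ c + 2 := (Q.toFinset_card_le).trans hQlen
      have h2 : ({x, y} : Finset V).card = 2 := by
        rw [Finset.card_insert_of_notMem (by simpa using hxy), Finset.card_singleton]
      omega
    set S' := S ∪ (Q.toFinset \ {x, y}) with hS'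
    have hS'card : S'.card ≤ c * (q - k) := by
      have h1 : S'.card ≤ S.card + (Q.toFinset \ {x, y}).card :=
        Finset.card_union_le _ _
      have h2 : c * (q - k) = c * (q - (k + 1)) + c := by
        rw [show q - k = (q - (k + 1)) + 1 by omega, Nat.mul_succ]
      omega
    have hxS' : x ∉ S' := by simp [hS', hxS]
    have hyS' : y ∉ S' := by simp [hS', hyS]
    obtain ⟨L, hLlen, hLmem, hLpair⟩ := ih (by omega) S' hS'card hxS' hyS'
    have hQS : ∀ v ∈ Q, v ≠ x → v ≠ y → v ∉ S := by
      intro v hv hvx hvy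
      rcases hQin v hv with rfl | rfl | ⟨p', hp', hvp⟩ | hvW
      · exact absurd rfl hvx
      · exact absurd rfl hvy
      · exact hPS p' hp' v hvp
      · exact hWS v hvW
    have hkey : ∀ Q' ∈ L, ∀ v ∈ Q, v ∈ Q' → v = x ∨ v = y := by
      intro Q' hQ' v hv hv'
      by_contra hcon
      push_neg at hcon
      have hvS' : v ∈ S' := by
        simp only [hS', Finset.mem_union, Finset.mem_sdiff, List.mem_toFinset,
          Finset.mem_insert, Finset.mem_singleton]
        right
        exact ⟨hv, by tauto⟩
      exact (hLmem Q' hQ').2.2 v hv' hcon.1 hcon.2 hvS'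
    have hQint : ∃ v ∈ Q, v ≠ x ∧ v ≠ y := by
      obtain ⟨_, h2, _, h4, h5, _⟩ := path_facts hxy hnadj hQpath
      exact ⟨_, h2, h4, h5⟩
    refine ⟨Q :: L, by simp [hLlen], ?_, ?_⟩
    · intro Q' hQ'
      rcases List.mem_cons.1 hQ' with rfl | hQ'
      · exact ⟨hQpath, hQlen, hQS⟩
      · obtain ⟨h1, h2, h3⟩ := hLmem Q' hQ'
        exact ⟨h1, h2, fun v hv hvx hvy =>
          fun hvS => h3 v hv hvx hvy (Finset.mem_union_left _ hvS)⟩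
    · rw [List.pairwise_cons]
      refine ⟨?_, hLpair⟩
      intro Q' hQ'
      refine ⟨?_, hkey Q' hQ'⟩
      intro hEq
      obtain ⟨v, hv, hvx, hvy⟩ := hQint
      rcases hkey Q' hQ' v hv (hEq ▸ hv) with rfl | rfl
      · exact hvx rfl
      · exact hvy rfl

theorem stmt7 (c p q : ℕ) (hc : 0 < c) (hp : 0 < p) (hq : 0 < q)
    (V : Type) (G : SimpleGraph V) (x y : V) (hxy : x ≠ y) (hnadj : ¬ G.Adj x y)
    (P0 : Finset (List V)) (hcard : P0.card = c * (p + 1) * q)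
    (hpaths : ∀ P ∈ P0, IsXYPath G x y P)
    (hdisj : ∀ P ∈ P0, ∀ Q ∈ P0, P ≠ Q → ∀ v ∈ P, v ∈ Q → v = x ∨ v = y)
    (W0 : List V) (hW0 : XSlash G x y P0 W0) :
    (∃ P ⊆ P0, P.card = p ∧ ∃ W : List V, W <:+: W0 ∧ XSlash G x y P W ∧
      ¬ ∃ Q : List V, IsXYPath G x y Q ∧ Q.length ≤ c + 2 ∧
        ∀ v ∈ Q, v = x ∨ v = y ∨ (∃ p' ∈ P, v ∈ p') ∨ v ∈ W) ∨
    (∃ Q : Finset (List V), Q.card = q ∧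
      (∀ p' ∈ Q, IsXYPath G x y p' ∧ p'.length ≤ c + 2) ∧
      ∀ p' ∈ Q, ∀ p'' ∈ Q, p' ≠ p'' → ∀ v ∈ p', v ∈ p'' → v = x ∨ v = y) := by
  classical
  by_cases hA : (∃ P ⊆ P0, P.card = p ∧ ∃ W : List V, W <:+: W0 ∧ XSlash G x y P W ∧
      ¬ ∃ Q : List V, IsXYPath G x y Q ∧ Q.length ≤ c + 2 ∧
        ∀ v ∈ Q, v = x ∨ v = y ∨ (∃ p' ∈ P, v ∈ p') ∨ v ∈ W)
  · exact Or.inl hA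
  · right
    push_neg at hA
    have hnoA : ∀ P ⊆ P0, P.card = p → ∀ W, W <:+: W0 → XSlash G x y P W →
        ∃ Q, IsXYPath G x y Q ∧ Q.length ≤ c + 2 ∧
          ∀ v ∈ Q, v = x ∨ v = y ∨ (∃ p' ∈ P, v ∈ p') ∨ v ∈ W := by
      intro P hPsub hPcard W hWinf hslash
      exact hA P hPsub hPcard W hWinf hslash
    obtain ⟨L, hLlen, hLmem, hLpair⟩ :=
      core_lemma c p q hc hp hq hxy hnadj P0 (le_of_eq hcard.symm) hpaths hdisj
        W0 hW0 hnoA q le_rfl ∅ (by simp) (by simp) (by simp)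
    have hnodup : L.Nodup := hLpair.imp (fun h => h.1)
    refine ⟨L.toFinset, by rw [List.toFinset_card_of_nodup hnodup, hLlen], ?_, ?_⟩
    · intro p' hp'
      have := hLmem p' (List.mem_toFinset.1 hp')
      exact ⟨this.1, this.2.1⟩
    · have hsymm : ∀ ⦃a⦄, a ∈ L → ∀ ⦃b⦄, b ∈ L → a ≠ b →
          (∀ v ∈ a, v ∈ b → v = x ∨ v = y) :=
        by
          haveI : Std.Symm (fun Q Q' : List V => ∀ v ∈ Q, v ∈ Q' → v = x ∨ v = y) :=
            ⟨fun Q Q' h v hv hv' => h v hv' hv⟩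
          exact List.Pairwise.forall (hLpair.imp (fun h => h.2))
      intro p' hp' p'' hp'' hne v hv hv'
      exact hsymm (List.mem_toFinset.1 hp') (List.mem_toFinset.1 hp'') hne v hv hv'
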